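/- Let F be a number field with ring of integers O, let n ≥ 1, and let 𝔞 be a nonzero fractional ideal of O. Define Λ_{𝔞,n} ⊆ Mat_n(F) to be the set of n×n matrices (x_{ij}) with x_{ij} ∈ O for 1 ≤ i,j ≤ n−1, x_{in} ∈ 𝔞^{-1} for 1 ≤ i ≤ n−1, x_{nj} ∈ 𝔞 for 1 ≤ j ≤ n−1, and x_{nn} ∈ O. Then Λ_{𝔞,n} is a maximal O-order in Mat_n(F). -/

import Mathlib

open scoped NumberField nonZeroDivisors

section

variable {F : Type*} [Field F] [NumberField F]

/-- The fractional ideal prescribing the `(i,j)` entry of the standard maximal order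
`Λ_{𝔞,n}` in `Mat_n(F)`: entries are in `𝓞 F` except in the last column (in `𝔞⁻¹`) and the
last row (in `𝔞`), with the `(n,n)` corner in `𝓞 F`. -/
noncomputable def entryIdeal (𝔞 : FractionalIdeal (𝓞 F)⁰ F) (n : ℕ) (i j : Fin n) :
    FractionalIdeal (𝓞 F)⁰ F :=
  if i.val = n - 1 then (if j.val = n - 1 then 1 else 𝔞) else (if j.val = n - 1 then 𝔞⁻¹ else 1)

/-- The standard ("nice form") maximal order `Λ_{𝔞,n}` in `Mat_n(F)`. -/
noncomputable def stdOrder (𝔞 : FractionalIdeal (𝓞 F)⁰ F) (n : ℕ) :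
    Set (Matrix (Fin n) (Fin n) F) :=
  {x | ∀ i j, x i j ∈ entryIdeal 𝔞 n i j}

namespace StdOrderAux

/-- exponent function -/
def χ (n : ℕ) (i : Fin n) : ℤ := if i.val = n - 1 then 1 else 0

variable {𝔞 : FractionalIdeal (𝓞 F)⁰ F} {n : ℕ}

lemma entryIdeal_eq (h𝔞 : 𝔞 ≠ 0) (i j : Fin n) :
    entryIdeal 𝔞 n i j = 𝔞 ^ (χ n i - χ n j) := by
  unfold entryIdeal χ
  split_ifs <;> simp [zpow_sub₀ h𝔞]

lemma entryIdeal_ne_zero (h𝔞 : 𝔞 ≠ 0) (i j : Fin n) : entryIdeal 𝔞 n i j ≠ 0 := by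
  rw [entryIdeal_eq h𝔞]
  exact zpow_ne_zero _ h𝔞

lemma entryIdeal_diag (h𝔞 : 𝔞 ≠ 0) (i : Fin n) : entryIdeal 𝔞 n i i = 1 := by
  rw [entryIdeal_eq h𝔞, sub_self, zpow_zero]

lemma entryIdeal_mul (h𝔞 : 𝔞 ≠ 0) (i j k : Fin n) :
    entryIdeal 𝔞 n i j * entryIdeal 𝔞 n j k = entryIdeal 𝔞 n i k := by
  rw [entryIdeal_eq h𝔞, entryIdeal_eq h𝔞, entryIdeal_eq h𝔞, ← zpow_add₀ h𝔞]
  ring_nf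

lemma entryIdeal_inv (h𝔞 : 𝔞 ≠ 0) (i j : Fin n) :
    (entryIdeal 𝔞 n i j)⁻¹ = entryIdeal 𝔞 n j i := by
  rw [entryIdeal_eq h𝔞, entryIdeal_eq h𝔞, ← zpow_neg, neg_sub]

lemma mem_add {I : FractionalIdeal (𝓞 F)⁰ F} {x y : F} (hx : x ∈ I) (hy : y ∈ I) :
    x + y ∈ I := by
  rw [← FractionalIdeal.mem_coe] at *
  exact Submodule.add_mem _ hx hy

lemma mem_neg {I : FractionalIdeal (𝓞 F)⁰ F} {x : F} (hx : x ∈ I) : -x ∈ I := by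
  rw [← FractionalIdeal.mem_coe] at *
  exact Submodule.neg_mem _ hx

lemma mem_smul {I : FractionalIdeal (𝓞 F)⁰ F} (r : 𝓞 F) {x : F} (hx : x ∈ I) : r • x ∈ I := by
  rw [← FractionalIdeal.mem_coe] at *
  exact Submodule.smul_mem _ _ hx

/-- `stdBasisMatrix` as an `𝓞 F`-linear map. -/
noncomputable def sbmL (n : ℕ) (i j : Fin n) : F →ₗ[𝓞 F] Matrix (Fin n) (Fin n) F where
  toFun a := Matrix.single i j a
  map_add' a b := Matrix.single_add i j a b
  map_smul' r a := (Matrix.smul_single r i j a).symm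

lemma stdBasisMatrix_mem (h𝔞 : 𝔞 ≠ 0) (i j : Fin n) {a : F} (ha : a ∈ entryIdeal 𝔞 n i j) :
    Matrix.single i j a ∈ stdOrder 𝔞 n := by
  intro i' j'
  by_cases h : i = i' ∧ j = j'
  · obtain ⟨rfl, rfl⟩ := h
    rwa [Matrix.single_apply_same]
  · rw [Matrix.single_apply_of_ne (h := h)]
    exact (entryIdeal 𝔞 n i' j').zero_mem

lemma eDiag_mem (h𝔞 : 𝔞 ≠ 0) (i : Fin n) :
    Matrix.single i i (1 : F) ∈ stdOrder 𝔞 n := by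
  apply stdBasisMatrix_mem h𝔞
  rw [entryIdeal_diag h𝔞]
  exact FractionalIdeal.one_mem_one _

end StdOrderAux

namespace StdOrderAux

variable {𝔞 : FractionalIdeal (𝓞 F)⁰ F} {n : ℕ}

lemma mem_one_of_pow_mem (Q : Submodule (𝓞 F) F) (hfg : Q.FG) (c : F)
    (h : ∀ k : ℕ, c ^ k ∈ Q) : c ∈ (1 : FractionalIdeal (𝓞 F)⁰ F) := by
  set P : Submodule (𝓞 F) F := Submodule.span (𝓞 F) (Set.range fun k : ℕ => c ^ k) with hP
  have hPQ : P ≤ Q := Submodule.span_le.mpr (by rintro _ ⟨k, rfl⟩; exact h k)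
  obtain ⟨a, ha, hden⟩ := FractionalIdeal.isFractional_of_fg (S := (𝓞 F)⁰) hfg
  have hPfr : IsFractional (𝓞 F)⁰ P := ⟨a, ha, fun b hb => hden b (hPQ hb)⟩
  set P' : FractionalIdeal (𝓞 F)⁰ F := ⟨P, hPfr⟩ with hP'
  have h1P : (1 : F) ∈ P' := Submodule.subset_span ⟨0, pow_zero c⟩
  have hP'ne : P' ≠ 0 := fun h0 => one_ne_zero (FractionalIdeal.eq_zero_iff.mp h0 1 h1P)
  have hmul : FractionalIdeal.spanSingleton (𝓞 F)⁰ c * P' ≤ P' := by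
    rw [FractionalIdeal.mul_le]
    intro u hu v hv
    obtain ⟨z, rfl⟩ := (FractionalIdeal.mem_spanSingleton _).mp hu
    have hcv : c * v ∈ P := by
      have h2 : Submodule.map (LinearMap.mulLeft (𝓞 F) c) P ≤ P := by
        rw [hP, Submodule.map_span, Submodule.span_le]
        rintro _ ⟨_, ⟨k, rfl⟩, rfl⟩
        exact Submodule.subset_span ⟨k + 1, by simp [pow_succ, mul_comm]⟩
      exact h2 ⟨v, hv, rfl⟩
    show z • c * v ∈ P'
    rw [smul_mul_assoc]
    exact Submodule.smul_mem P z hcv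
  have hle : FractionalIdeal.spanSingleton (𝓞 F)⁰ c ≤ 1 := by
    calc FractionalIdeal.spanSingleton (𝓞 F)⁰ c
        = FractionalIdeal.spanSingleton (𝓞 F)⁰ c * P' * P'⁻¹ := by
          rw [mul_assoc, mul_inv_cancel₀ hP'ne, mul_one]
      _ ≤ P' * P'⁻¹ := mul_left_mono hmul
      _ = 1 := mul_inv_cancel₀ hP'ne
  exact FractionalIdeal.spanSingleton_le_iff_mem.mp hle

lemma mem_of_mul_inv (h𝔞 : 𝔞 ≠ 0) (i j : Fin n) {c : F}
    (h : ∀ b ∈ entryIdeal 𝔞 n j i, c * b ∈ (1 : FractionalIdeal (𝓞 F)⁰ F)) :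
    c ∈ entryIdeal 𝔞 n i j := by
  have h1 : FractionalIdeal.spanSingleton (𝓞 F)⁰ c * entryIdeal 𝔞 n j i ≤ 1 := by
    rw [FractionalIdeal.mul_le]
    intro u hu b hb
    obtain ⟨z, rfl⟩ := (FractionalIdeal.mem_spanSingleton _).mp hu
    rw [smul_mul_assoc]
    exact mem_smul z (h b hb)
  have h2 := mul_left_mono (a := entryIdeal 𝔞 n i j) h1
  simp only [one_mul] at h2
  rw [mul_assoc, ← entryIdeal_inv h𝔞 i j,
    inv_mul_cancel₀ (entryIdeal_ne_zero h𝔞 i j), mul_one] at h2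
  exact FractionalIdeal.spanSingleton_le_iff_mem.mp h2

lemma span_top (h𝔞 : 𝔞 ≠ 0) : Submodule.span F (stdOrder 𝔞 n) = ⊤ := by
  rw [eq_top_iff]
  intro x _
  have hx : x = ∑ i, ∑ j, Matrix.single i j (x i j) :=
    Matrix.matrix_eq_sum_single x
  rw [hx]
  refine Submodule.sum_mem _ fun i _ => Submodule.sum_mem _ fun j _ => ?_
  obtain ⟨a, haI, hane⟩ : ∃ a ∈ entryIdeal 𝔞 n i j, a ≠ 0 := by
    by_contra h
    push_neg at h
    exact entryIdeal_ne_zero h𝔞 i j (FractionalIdeal.eq_zero_iff.mpr h)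
  have hmem : Matrix.single i j a ∈ Submodule.span F (stdOrder 𝔞 n) :=
    Submodule.subset_span (stdBasisMatrix_mem h𝔞 i j haI)
  have heq : Matrix.single i j (x i j)
      = (x i j * a⁻¹) • Matrix.single i j a := by
    rw [Matrix.smul_single, smul_eq_mul, mul_assoc, inv_mul_cancel₀ hane, mul_one]
  rw [heq]
  exact Submodule.smul_mem _ _ hmem

lemma exists_fg (h𝔞 : 𝔞 ≠ 0) : ∃ t : Finset (Matrix (Fin n) (Fin n) F),
    (t : Set (Matrix (Fin n) (Fin n) F)) ⊆ stdOrder 𝔞 n ∧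
    stdOrder 𝔞 n ⊆ (Submodule.span (𝓞 F) (t : Set (Matrix (Fin n) (Fin n) F)) :
      Set (Matrix (Fin n) (Fin n) F)) := by
  have hfg : ∀ i j : Fin n, ∃ s : Finset F,
      Submodule.span (𝓞 F) (s : Set F) = (entryIdeal 𝔞 n i j : Submodule (𝓞 F) F) :=
    fun i j => FractionalIdeal.fg_of_isNoetherianRing le_rfl _
  choose s hs using hfg
  haveI : DecidableEq (Matrix (Fin n) (Fin n) F) := Classical.decEq _
  refine ⟨Finset.univ.biUnion (fun p : Fin n × Fin n =>
    (s p.1 p.2).image (fun a => Matrix.single p.1 p.2 a)), ?_, ?_⟩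
  · intro m hm
    simp only [Finset.coe_biUnion, Finset.coe_univ, Set.mem_iUnion, Finset.mem_coe,
      Finset.mem_image] at hm
    obtain ⟨p, -, a, ha, rfl⟩ := hm
    apply stdBasisMatrix_mem h𝔞
    rw [← FractionalIdeal.mem_coe, ← hs p.1 p.2]
    exact Submodule.subset_span ha
  · intro x hx
    have hxe : x = ∑ i, ∑ j, Matrix.single i j (x i j) :=
      Matrix.matrix_eq_sum_single x
    rw [SetLike.mem_coe] at *
    rw [hxe]
    refine Submodule.sum_mem _ fun i _ => Submodule.sum_mem _ fun j _ => ?_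
    have h1 : x i j ∈ Submodule.span (𝓞 F) ((s i j : Set F)) := by
      rw [hs i j]
      exact FractionalIdeal.mem_coe.mpr (hx i j)
    have h2 : Matrix.single i j (x i j)
        ∈ Submodule.map (sbmL n i j) (Submodule.span (𝓞 F) ((s i j : Set F))) :=
      ⟨_, h1, rfl⟩
    rw [Submodule.map_span] at h2
    refine Submodule.span_mono ?_ h2
    rintro _ ⟨a, ha, rfl⟩
    simp only [Finset.coe_biUnion, Finset.coe_univ, Set.mem_iUnion, Finset.mem_coe,
      Finset.mem_image]
    exact ⟨(i, j), Set.mem_univ _, a, ha, rfl⟩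

end StdOrderAux

/-- An `𝓞 F`-order of full rank in `Mat_n(F)`: a subring, stable under `𝓞 F`, finitely
generated as an `𝓞 F`-module, and spanning `Mat_n(F)` over `F`. -/
def IsOrderSet {n : ℕ} (S : Set (Matrix (Fin n) (Fin n) F)) : Prop :=
  (1 : Matrix (Fin n) (Fin n) F) ∈ S ∧
  (∀ x ∈ S, ∀ y ∈ S, x + y ∈ S) ∧ (∀ x ∈ S, -x ∈ S) ∧
  (∀ x ∈ S, ∀ y ∈ S, x * y ∈ S) ∧
  (∀ r : 𝓞 F, ∀ x ∈ S, r • x ∈ S) ∧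
  (∃ t : Finset (Matrix (Fin n) (Fin n) F), (t : Set (Matrix (Fin n) (Fin n) F)) ⊆ S ∧
    S ⊆ (Submodule.span (𝓞 F) (t : Set (Matrix (Fin n) (Fin n) F)) : Set (Matrix (Fin n) (Fin n) F))) ∧
  Submodule.span F S = ⊤

/-- A maximal `𝓞 F`-order in `Mat_n(F)`. -/
def IsMaximalOrderSet {n : ℕ} (S : Set (Matrix (Fin n) (Fin n) F)) : Prop :=
  IsOrderSet S ∧ ∀ S' : Set (Matrix (Fin n) (Fin n) F), IsOrderSet S' → S ⊆ S' → S' = S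

/-- **Proposition 5.1 (first part).** `Λ_{𝔞,n}` is a maximal `𝓞 F`-order in `Mat_n(F)`. -/
theorem stdOrder_isMaximalOrder (𝔞 : FractionalIdeal (𝓞 F)⁰ F) (h𝔞 : 𝔞 ≠ 0) (n : ℕ)
    (hn : 1 ≤ n) :
    IsMaximalOrderSet (stdOrder 𝔞 n) := by
  obtain ⟨t, ht1, ht2⟩ := StdOrderAux.exists_fg h𝔞 (n := n)
  refine ⟨⟨?one, ?add, ?neg, ?mul, ?smul, ⟨t, ht1, ht2⟩, StdOrderAux.span_top h𝔞⟩, ?max⟩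
  case one =>
    intro i j
    by_cases h : i = j
    · subst h
      rw [Matrix.one_apply_eq, StdOrderAux.entryIdeal_diag h𝔞]
      exact FractionalIdeal.one_mem_one _
    · rw [Matrix.one_apply_ne h]
      exact (entryIdeal 𝔞 n i j).zero_mem
  case add =>
    intro x hx y hy i j
    rw [Matrix.add_apply]
    exact StdOrderAux.mem_add (hx i j) (hy i j)
  case neg =>
    intro x hx i j
    rw [Matrix.neg_apply]
    exact StdOrderAux.mem_neg (hx i j)
  case mul =>
    intro x hx y hy i k
    rw [Matrix.mul_apply, ← FractionalIdeal.mem_coe]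
    refine Submodule.sum_mem _ fun j _ => ?_
    rw [FractionalIdeal.mem_coe, ← StdOrderAux.entryIdeal_mul h𝔞 i j k]
    exact FractionalIdeal.mul_mem_mul (hx i j) (hy j k)
  case smul =>
    intro r x hx i j
    rw [Matrix.smul_apply]
    exact StdOrderAux.mem_smul r (hx i j)
  case max =>
    intro S' hS' hsub
    refine Set.Subset.antisymm ?_ hsub
    intro x hx i j
    obtain ⟨h1S, hadd, hneg, hmulS, hsmulS, ⟨t', ht'sub, ht'span⟩, -⟩ := hS'
    let evL : Matrix (Fin n) (Fin n) F →ₗ[𝓞 F] F :=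
      { toFun := fun m => m i i, map_add' := fun a b => rfl, map_smul' := fun r a => rfl }
    set Q : Submodule (𝓞 F) F :=
      Submodule.map evL (Submodule.span (𝓞 F) (t' : Set (Matrix (Fin n) (Fin n) F))) with hQ
    have hQfg : Q.FG := Submodule.FG.map _ ⟨t', rfl⟩
    have hevQ : ∀ z ∈ S', z i i ∈ Q := fun z hz => ⟨z, ht'span hz, rfl⟩
    have hkey : Matrix.single i i (1:F) * x * Matrix.single j j (1:F)
        = Matrix.single i j (x i j) := by
      ext a b
      by_cases hai : a = i
      · by_cases hbj : b = j
        · subst hai; subst hbj; simp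
        · subst hai
          rw [Matrix.mul_single_apply_of_ne (hbj := hbj),
            Matrix.single_apply_of_ne (h := by tauto)]
      · rw [Matrix.single_apply_of_ne (h := by tauto)]
        by_cases hbj : b = j
        · subst hbj
          rw [Matrix.mul_single_apply_same,
            Matrix.single_mul_apply_of_ne (h := hai), zero_mul]
        · rw [Matrix.mul_single_apply_of_ne (hbj := hbj)]
    have hxij : Matrix.single i j (x i j) ∈ S' := by
      rw [← hkey]
      exact hmulS _ (hmulS _ (hsub (StdOrderAux.eDiag_mem h𝔞 i)) _ hx) _
        (hsub (StdOrderAux.eDiag_mem h𝔞 j))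
    refine StdOrderAux.mem_of_mul_inv h𝔞 i j ?_
    intro b hb
    have hzb : Matrix.single i i (x i j * b) ∈ S' := by
      have h3 := hmulS _ hxij _ (hsub (StdOrderAux.stdBasisMatrix_mem h𝔞 j i hb))
      rwa [Matrix.single_mul_single_same] at h3
    have hpow : ∀ k : ℕ, Matrix.single i i ((x i j * b) ^ k) ∈ S' := by
      intro k
      induction k with
      | zero => rw [pow_zero]; exact hsub (StdOrderAux.eDiag_mem h𝔞 i)
      | succ k ih =>
        have h4 := hmulS _ ih _ hzb
        rwa [Matrix.single_mul_single_same, ← pow_succ] at h4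
    refine StdOrderAux.mem_one_of_pow_mem Q hQfg _ (fun k => ?_)
    have h5 := hevQ _ (hpow k)
    rwa [Matrix.single_apply_same] at h5


end
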